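/- Let κ ∈ ℒ with finite mean m(κ), let λ₁ > 0 and λ₂ > 0 satisfy 1 − (y − m(κ))λ₁ − (B − f(|y|))λ₂ ≥ 0 for all y ∈ ℝ, and let X₁,…,X_n be i.i.d. random variables with law κ. Then for every u ≥ 0, P( (1/n) Σ_{i=1}^n log( 1 − (X_i − m(κ))λ₁ − (B − f(|X_i|))λ₂ ) ≥ u ) ≤ e^{−nu}. -/

import Mathlib

open MeasureTheory Filter Set
open scoped ENNReal NNReal Classical

/-- Kullback–Leibler divergence between two measures on ℝ, valued in `ℝ≥0∞`
(`∞` if `η` is not absolutely continuous w.r.t. `κ` or the log-likelihood ratio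
is not integrable under `η`). -/
noncomputable def KL (η κ : Measure ℝ) : ℝ≥0∞ :=
  if η ≪ κ ∧ Integrable (llr η κ) η then ENNReal.ofReal (∫ y, llr η κ y ∂η) else ⊤

/-- The mean of a measure on ℝ. -/
noncomputable def meanM (η : Measure ℝ) : ℝ := ∫ y, y ∂η

/-- Membership in the class `ℒ`: Borel probability measures on ℝ with `E[f(|X|)] ≤ B`. -/
def inL (f : ℝ → ℝ) (B : ℝ) (κ : Measure ℝ) : Prop :=
  IsProbabilityMeasure κ ∧ (∫⁻ y, ENNReal.ofReal (f |y|) ∂κ) ≤ ENNReal.ofReal B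

/-- `KL_inf(η, x)`: the infimum of `KL(η, κ)` over `κ ∈ ℒ` with `m(κ) ≥ x` when
`x ≥ m(η)`, and over `κ ∈ ℒ` with `m(κ) ≤ x` when `x < m(η)`. -/
noncomputable def KLinf (f : ℝ → ℝ) (B : ℝ) (η : Measure ℝ) (x : ℝ) : ℝ≥0∞ :=
  if meanM η ≤ x then
    ⨅ κ ∈ {κ : Measure ℝ | inL f B κ ∧ x ≤ meanM κ}, KL η κ
  else
    ⨅ κ ∈ {κ : Measure ℝ | inL f B κ ∧ meanM κ ≤ x}, KL η κ

/-- Extended-real logarithm of a real number: `log r` for `r > 0` and `−∞` for `r ≤ 0`. -/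
noncomputable def elog (r : ℝ) : EReal := ENNReal.log (ENNReal.ofReal r)


private lemma ereal_coe_sum {ι : Type*} (s : Finset ι) (g : ι → ℝ) :
    ((∑ i ∈ s, g i : ℝ) : EReal) = ∑ i ∈ s, (g i : EReal) := by
  classical
  induction s using Finset.induction_on with
  | empty => simp
  | insert _ _ hi ih => rw [Finset.sum_insert hi, Finset.sum_insert hi, EReal.coe_add, ih]

/-- For `κ ∈ ℒ` and dual-feasible `(λ₁, λ₂)` with `λ₁, λ₂ > 0`, if
`X₁, …, X_n` are i.i.d. with law `κ`, then for every `u ≥ 0`,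
`P((1/n) ∑ᵢ log(1 − (Xᵢ − m(κ))λ₁ − (B − f(|Xᵢ|))λ₂) ≥ u) ≤ e^{−n u}`. -/
theorem stmt_15 (f : ℝ → ℝ) (B : ℝ)
    (hf_mono : StrictMonoOn f (Set.Ici 0))
    (hf_cont : ContinuousOn f (Set.Ici 0))
    (hf_nonneg : ∀ y : ℝ, 0 ≤ y → 0 ≤ f y)
    (hf_conv : StrictConvexOn ℝ (Set.Ici 0) f)
    (hf_growth : Tendsto (fun y : ℝ => f y / y) atTop atTop)
    (hB : 0 < B) (hf0B : f 0 < B)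
    (κ : Measure ℝ) (hκ : inL f B κ) (hmean : Integrable (fun y : ℝ => y) κ)
    (l₁ l₂ : ℝ) (hl₁ : 0 < l₁) (hl₂ : 0 < l₂)
    (hfeas : ∀ y : ℝ, 0 ≤ 1 - (y - meanM κ) * l₁ - (B - f |y|) * l₂)
    (Ω : Type*) [MeasurableSpace Ω] (P : Measure Ω) [IsProbabilityMeasure P]
    (n : ℕ) (hn : 0 < n) (X : Fin n → Ω → ℝ)
    (hXmeas : ∀ i, Measurable (X i))
    (hiid : ProbabilityTheory.iIndepFun X P)
    (hlaw : ∀ i, Measure.map (X i) P = κ)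
    (u : ℝ) (hu : 0 ≤ u) :
    P {ω : Ω | (u : EReal) ≤ ((n : ℝ)⁻¹ : ℝ) *
        ∑ i : Fin n, elog (1 - (X i ω - meanM κ) * l₁ - (B - f |X i ω|) * l₂)} ≤
      ENNReal.ofReal (Real.exp (-(n * u))) := by
  classical
  obtain ⟨hκprob, hκB⟩ := hκ
  set m : ℝ := meanM κ with hm
  set G : ℝ → ℝ := fun y => 1 - (y - m) * l₁ - (B - f |y|) * l₂ with hGdef
  have hGnonneg : ∀ y, 0 ≤ G y := fun y => hfeas y
  -- continuity and measurability of `f ∘ |·|` and `G`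
  have habs : Continuous fun y : ℝ => f |y| := by
    rw [← continuousOn_univ]
    exact hf_cont.comp continuous_abs.continuousOn fun x _ => abs_nonneg x
  have hGcont : Continuous G :=
    ((continuous_const.sub ((continuous_id.sub continuous_const).mul continuous_const)).sub
      ((continuous_const.sub habs).mul continuous_const))
  -- integrability facts under κ
  have hf_nn : ∀ y : ℝ, 0 ≤ f |y| := fun y => hf_nonneg _ (abs_nonneg y)
  have hfint : Integrable (fun y => f |y|) κ := by
    refine ⟨habs.aestronglyMeasurable, ?_⟩
    rw [hasFiniteIntegral_iff_ofReal (ae_of_all _ hf_nn)]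
    exact lt_of_le_of_lt hκB ENNReal.ofReal_lt_top
  have hfB : ∫ y, f |y| ∂κ ≤ B := by
    rw [integral_eq_lintegral_of_nonneg_ae (ae_of_all _ hf_nn) habs.aestronglyMeasurable]
    rw [← ENNReal.toReal_ofReal hB.le]
    exact ENNReal.toReal_mono ENNReal.ofReal_ne_top hκB
  have hGint : Integrable G κ := by
    refine Integrable.sub (Integrable.sub (integrable_const 1) ?_) ?_
    · exact (hmean.sub (integrable_const m)).mul_const l₁
    · exact ((integrable_const B).sub hfint).mul_const l₂
  -- expected value of G is at most 1
  have hGle : ∫ y, G y ∂κ ≤ 1 := by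
    have h1 : ∫ y, (y - m) ∂κ = 0 := by
      rw [integral_sub hmean (integrable_const m), integral_const]
      simp [hm, meanM]
    have hI1 : Integrable (fun y : ℝ => (y - m) * l₁) κ :=
      (hmean.sub (integrable_const m)).mul_const l₁
    have hI2 : Integrable (fun y : ℝ => (B - f |y|) * l₂) κ :=
      ((integrable_const B).sub hfint).mul_const l₂
    have h2 : ∫ y, G y ∂κ
        = 1 - (∫ y, (y - m) ∂κ) * l₁ - (B - ∫ y, f |y| ∂κ) * l₂ := by
      calc ∫ y, G y ∂κ
          = (∫ y, ((1:ℝ) - (y - m) * l₁) ∂κ) - ∫ y, ((B - f |y|) * l₂) ∂κ :=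
            integral_sub ((integrable_const 1).sub hI1) hI2
        _ = ((∫ _y, (1:ℝ) ∂κ) - ∫ y, ((y - m) * l₁) ∂κ) - ∫ y, ((B - f |y|) * l₂) ∂κ := by
            rw [integral_sub (integrable_const 1) hI1]
        _ = (1 - (∫ y, (y - m) ∂κ) * l₁) - (∫ y, (B - f |y|) ∂κ) * l₂ := by
            rw [integral_mul_const, integral_mul_const, integral_const]
            simp
        _ = 1 - (∫ y, (y - m) ∂κ) * l₁ - (B - ∫ y, f |y| ∂κ) * l₂ := by
            rw [integral_sub (integrable_const B) hfint, integral_const]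
            simp
    rw [h2, h1]
    have h3 : 0 ≤ (B - ∫ y, f |y| ∂κ) * l₂ :=
      mul_nonneg (by linarith) hl₂.le
    linarith
  have hGlint : ∫⁻ y, ENNReal.ofReal (G y) ∂κ ≤ 1 := by
    rw [← ofReal_integral_eq_lintegral_ofReal hGint (ae_of_all _ hGnonneg)]
    calc ENNReal.ofReal (∫ y, G y ∂κ) ≤ ENNReal.ofReal 1 := ENNReal.ofReal_le_ofReal hGle
      _ = 1 := ENNReal.ofReal_one
  -- the ENNReal-valued random variables
  set Y : Fin n → Ω → ℝ≥0∞ := fun i ω => ENNReal.ofReal (G (X i ω)) with hYdef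
  have hYmeas : ∀ i, Measurable (Y i) := fun i =>
    (hGcont.measurable.comp (hXmeas i)).ennreal_ofReal
  have hYindep : ProbabilityTheory.iIndepFun Y P :=
    hiid.comp (fun _ y => ENNReal.ofReal (G y)) fun _ => hGcont.measurable.ennreal_ofReal
  have hYlint : ∀ i, ∫⁻ ω, Y i ω ∂P ≤ 1 := by
    intro i
    have hmap := lintegral_map (μ := P) (f := fun y => ENNReal.ofReal (G y))
      hGcont.measurable.ennreal_ofReal (hXmeas i)
    rw [hlaw i] at hmap
    calc ∫⁻ ω, Y i ω ∂P = ∫⁻ y, ENNReal.ofReal (G y) ∂κ := hmap.symm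
      _ ≤ 1 := hGlint
  -- independence gives the product formula
  have key : ∀ s : Finset (Fin n),
      ∫⁻ ω, ∏ i ∈ s, Y i ω ∂P = ∏ i ∈ s, ∫⁻ ω, Y i ω ∂P := by
    intro s
    induction s using Finset.induction_on with
    | empty => simp
    | @insert a s ha ih =>
      have hindep : ProbabilityTheory.IndepFun (∏ j ∈ s, Y j) (Y a) P :=
        hYindep.indepFun_finsetProd_of_notMem hYmeas ha
      have hmeasprod : Measurable (fun ω => ∏ j ∈ s, Y j ω) :=
        Finset.measurable_prod _ fun j _ => hYmeas j
      have hfn : (∏ j ∈ s, Y j) = fun ω => ∏ j ∈ s, Y j ω := by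
        funext ω; simp [Finset.prod_apply]
      have := ProbabilityTheory.lintegral_mul_eq_lintegral_mul_lintegral_of_indepFun
        (μ := P) (f := ∏ j ∈ s, Y j) (g := Y a)
        (by rw [hfn]; exact hmeasprod) (hYmeas a) hindep
      simp only [Pi.mul_apply, Finset.prod_apply] at this
      rw [Finset.prod_insert ha]
      simp_rw [Finset.prod_insert ha]
      calc ∫⁻ ω, Y a ω * ∏ i ∈ s, Y i ω ∂P
          = ∫⁻ ω, (∏ i ∈ s, Y i ω) * Y a ω ∂P := by simp_rw [mul_comm]
        _ = (∫⁻ ω, ∏ i ∈ s, Y i ω ∂P) * ∫⁻ ω, Y a ω ∂P := this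
        _ = (∏ i ∈ s, ∫⁻ ω, Y i ω ∂P) * ∫⁻ ω, Y a ω ∂P := by rw [ih]
        _ = (∫⁻ ω, Y a ω ∂P) * ∏ i ∈ s, ∫⁻ ω, Y i ω ∂P := mul_comm _ _
  have hprodle : ∫⁻ ω, ∏ i : Fin n, Y i ω ∂P ≤ 1 := by
    rw [key Finset.univ]
    calc ∏ i : Fin n, ∫⁻ ω, Y i ω ∂P ≤ ∏ _i : Fin n, (1 : ℝ≥0∞) :=
          Finset.prod_le_prod' fun i _ => hYlint i
      _ = 1 := by simp
  -- Markov
  have hnpos : (0:ℝ) < n := Nat.cast_pos.mpr hn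
  have hεpos : (0:ℝ≥0∞) < ENNReal.ofReal (Real.exp ((n:ℝ) * u)) :=
    ENNReal.ofReal_pos.mpr (Real.exp_pos _)
  have hmarkov : P {ω | ENNReal.ofReal (Real.exp ((n:ℝ) * u)) ≤ ∏ i : Fin n, Y i ω}
      ≤ ENNReal.ofReal (Real.exp (-((n:ℝ) * u))) := by
    calc P {ω | ENNReal.ofReal (Real.exp ((n:ℝ) * u)) ≤ ∏ i : Fin n, Y i ω}
        ≤ (∫⁻ ω, ∏ i : Fin n, Y i ω ∂P) / ENNReal.ofReal (Real.exp ((n:ℝ) * u)) :=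
          meas_ge_le_lintegral_div
            (Finset.measurable_prod _ fun i _ => hYmeas i).aemeasurable
            hεpos.ne' ENNReal.ofReal_ne_top
      _ ≤ 1 / ENNReal.ofReal (Real.exp ((n:ℝ) * u)) := by
          exact ENNReal.div_le_div_right hprodle _
      _ = ENNReal.ofReal (Real.exp (-((n:ℝ) * u))) := by
          rw [Real.exp_neg, ENNReal.ofReal_inv_of_pos (Real.exp_pos _), one_div]
  -- event inclusion
  have hsub : {ω : Ω | (u : EReal) ≤ ((n : ℝ)⁻¹ : ℝ) * ∑ i : Fin n, elog (G (X i ω))}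
      ⊆ {ω | ENNReal.ofReal (Real.exp ((n:ℝ) * u)) ≤ ∏ i : Fin n, Y i ω} := by
    intro ω hω
    simp only [Set.mem_setOf_eq] at hω ⊢
    by_cases hpos : ∀ i : Fin n, 0 < G (X i ω)
    · have hterm : ∀ i : Fin n, elog (G (X i ω)) = ((Real.log (G (X i ω)) : ℝ) : EReal) :=
        fun i => ENNReal.log_ofReal_of_pos (hpos i)
      rw [Finset.sum_congr rfl fun i _ => hterm i, ← ereal_coe_sum, ← EReal.coe_mul] at hω
      have hω' : u ≤ (n:ℝ)⁻¹ * ∑ i : Fin n, Real.log (G (X i ω)) := EReal.coe_le_coe_iff.mp hω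
      have hsum : (n:ℝ) * u ≤ ∑ i : Fin n, Real.log (G (X i ω)) := by
        have h2 := mul_le_mul_of_nonneg_left hω' hnpos.le
        rwa [← mul_assoc, mul_inv_cancel₀ hnpos.ne', one_mul] at h2
      have hexp : Real.exp ((n:ℝ) * u) ≤ ∏ i : Fin n, G (X i ω) := by
        calc Real.exp ((n:ℝ) * u) ≤ Real.exp (∑ i : Fin n, Real.log (G (X i ω))) :=
              Real.exp_le_exp.mpr hsum
          _ = ∏ i : Fin n, Real.exp (Real.log (G (X i ω))) := Real.exp_sum _ _
          _ = ∏ i : Fin n, G (X i ω) :=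
              Finset.prod_congr rfl fun i _ => Real.exp_log (hpos i)
      calc ENNReal.ofReal (Real.exp ((n:ℝ) * u))
          ≤ ENNReal.ofReal (∏ i : Fin n, G (X i ω)) := ENNReal.ofReal_le_ofReal hexp
        _ = ∏ i : Fin n, Y i ω :=
            ENNReal.ofReal_prod_of_nonneg fun i _ => (hpos i).le
    · exfalso
      push_neg at hpos
      obtain ⟨i₀, hi₀⟩ := hpos
      have h0 : G (X i₀ ω) = 0 := le_antisymm hi₀ (hGnonneg _)
      have hbot : elog (G (X i₀ ω)) = ⊥ := by
        rw [elog, h0]; simp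
      have hsumbot : ∑ i : Fin n, elog (G (X i ω)) = ⊥ := by
        rw [← Finset.add_sum_erase _ _ (Finset.mem_univ i₀), hbot, EReal.bot_add]
      rw [hsumbot, EReal.mul_bot_of_pos (EReal.coe_pos.mpr (inv_pos.mpr hnpos))] at hω
      exact (EReal.coe_ne_bot u) (le_bot_iff.mp hω)
  calc P {ω : Ω | (u : EReal) ≤ ((n : ℝ)⁻¹ : ℝ) *
        ∑ i : Fin n, elog (1 - (X i ω - m) * l₁ - (B - f |X i ω|) * l₂)}
      ≤ P {ω | ENNReal.ofReal (Real.exp ((n:ℝ) * u)) ≤ ∏ i : Fin n, Y i ω} :=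
        measure_mono hsub
    _ ≤ ENNReal.ofReal (Real.exp (-((n:ℝ) * u))) := hmarkov
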